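/- Let n and k be positive integers with k ≤ n, and let B be a subset of (Z/2)^n \ {0} containing an even number of k-odd vectors (a vector is k-odd if its k-th entry is 1). Then there exists an n-component Gauss phrase p such that B_k(p) = B and every component of p other than the k-th contains no single-component letters. -/

import Mathlib

/-- A word is a finite sequence of letters; we take the letters to be natural numbers. -/
abbrev Word := List ℕ

/-- An `n`-component phrase: an `n`-tuple of words. -/
abbrev Phrase (n : ℕ) := Fin n → Word

/-- The concatenation of all the components of a phrase. -/
def totalWord {n : ℕ} (p : Phrase n) : Word := (List.ofFn p).flatten

/-- A Gauss word: every letter that appears does so exactly twice. -/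
def IsGaussWord (w : Word) : Prop := ∀ a ∈ w, w.count a = 2

/-- A Gauss phrase: the concatenation of the components is a Gauss word. -/
def IsGaussPhrase {n : ℕ} (p : Phrase n) : Prop := IsGaussWord (totalWord p)

/-- The phrase written as a single word with separators (`none`) between components. -/
def sepWord {n : ℕ} (p : Phrase n) : List (Option ℕ) :=
  List.intercalate [none] (List.ofFn fun i => (p i).map some)

/-- A single open homotopy move: isomorphism, H1, H2 or H3.  Adjacency of two letters
in `sepWord p` means exactly that they are adjacent inside a single component. -/
inductive OpenMove {n : ℕ} : Phrase n → Phrase n → Prop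
  | iso (p : Phrase n) (f : ℕ → ℕ) (hf : Function.Bijective f) :
      OpenMove p (fun i => (p i).map f)
  | h1 (p q : Phrase n) (A : ℕ) (x y : List (Option ℕ))
      (hA : some A ∉ x ++ y)
      (hp : sepWord p = x ++ some A :: some A :: y)
      (hq : sepWord q = x ++ y) : OpenMove p q
  | h2 (p q : Phrase n) (A B : ℕ) (x y z : List (Option ℕ))
      (hAB : A ≠ B)
      (hA : some A ∉ x ++ y ++ z) (hB : some B ∉ x ++ y ++ z)
      (hp : sepWord p = x ++ some A :: some B :: (y ++ some B :: some A :: z))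
      (hq : sepWord q = x ++ y ++ z) : OpenMove p q
  | h3 (p q : Phrase n) (A B C : ℕ) (w x y z : List (Option ℕ))
      (hAB : A ≠ B) (hAC : A ≠ C) (hBC : B ≠ C)
      (hA : some A ∉ w ++ x ++ y ++ z) (hB : some B ∉ w ++ x ++ y ++ z)
      (hC : some C ∉ w ++ x ++ y ++ z)
      (hp : sepWord p =
        w ++ some A :: some B :: (x ++ some A :: some C :: (y ++ some B :: some C :: z)))
      (hq : sepWord q =
        w ++ some B :: some A :: (x ++ some C :: some A :: (y ++ some C :: some B :: z))) :
      OpenMove p q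

/-- The shift move: move the first letter of a component to its end. -/
inductive ShiftMove {n : ℕ} : Phrase n → Phrase n → Prop
  | shift (p : Phrase n) (k : Fin n) (A : ℕ) (y : Word) (hp : p k = A :: y) :
      ShiftMove p (Function.update p k (y ++ [A]))

/-- Open homotopy: the equivalence relation generated by isomorphisms and the
moves H1, H2, H3 (and their inverses). -/
def OpenHomotopic {n : ℕ} (p q : Phrase n) : Prop :=
  Relation.EqvGen (@OpenMove n) p q

/-- Homotopy: the equivalence relation generated by isomorphisms, shift moves and the
moves H1, H2, H3 (and their inverses). -/
def Homotopic {n : ℕ} (p q : Phrase n) : Prop :=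
  Relation.EqvGen (fun a b => OpenMove a b ∨ ShiftMove a b) p q

/-- The linking matrix of a phrase: the `(i,j)` entry, for `i ≠ j`, is the number
modulo 2 of (two-component) letters with one occurrence in component `i` and the
other occurrence in component `j`; the diagonal entries are `0`. -/
def linkingMatrix {n : ℕ} (p : Phrase n) : Matrix (Fin n) (Fin n) (ZMod 2) :=
  Matrix.of fun i j =>
    if i = j then 0
    else (((totalWord p).toFinset.filter
        fun a => (p i).count a = 1 ∧ (p j).count a = 1).card : ZMod 2)

/-- The subword strictly between the two occurrences of the letter `a` in `w`
(for a letter occurring exactly twice in `w`). -/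
def betweenWord (w : Word) (a : ℕ) : Word :=
  (w.drop (w.idxOf a + 1)).takeWhile fun b => b ≠ a

/-- Fukunaga's `T` invariant: `Tk p k` is the number, modulo 2, of odd-parity
single-component letters in the `k`-th component of `p`. -/
def Tk {n : ℕ} (p : Phrase n) (k : Fin n) : ZMod 2 :=
  (((p k).toFinset.filter
      fun a => (p k).count a = 2 ∧ Odd (betweenWord (p k) a).length).card : ZMod 2)

/-- The linking vector of a subword `w` of the `k`-th component of `p`: the `i`-th entry
is the number modulo 2 of letters occurring exactly once in `w` whose other occurrence
lies in the `i`-th component of `p`. -/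
def linkVec {n : ℕ} (p : Phrase n) (k : Fin n) (w : Word) : Fin n → ZMod 2 :=
  fun i =>
    ((w.toFinset.filter fun a => w.count a = 1 ∧
        (if i = k then (p k).count a = 2 else a ∈ p i)).card : ZMod 2)

/-- The linking vector of a single-component letter `a` of the `k`-th component:
the linking vector of the word between its two occurrences. -/
def letterVec {n : ℕ} (p : Phrase n) (k : Fin n) (a : ℕ) : Fin n → ZMod 2 :=
  linkVec p k (betweenWord (p k) a)

/-- `Bk p k`: the set of nonzero vectors `v ∈ (ℤ/2)ⁿ` which are the linking vector of an
odd number of single-component letters of the `k`-th component of `p`. -/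
def Bk {n : ℕ} (p : Phrase n) (k : Fin n) : Finset (Fin n → ZMod 2) :=
  Finset.univ.filter fun v => v ≠ 0 ∧
    Odd (((p k).toFinset.filter fun a => (p k).count a = 2 ∧ letterVec p k a = v).card)

/-- `Ok p k`: the set of orbits of `(ℤ/2)ⁿ` under translation by the linking vector of the
`k`-th component, other than the orbit of `0`, which contain the linking vector of an odd
number of single-component letters of the `k`-th component.  An orbit is recorded as the
finite set of its elements. -/
def Ok {n : ℕ} (p : Phrase n) (k : Fin n) : Finset (Finset (Fin n → ZMod 2)) :=
  Finset.univ.filter fun O =>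
    (∃ v : Fin n → ZMod 2, O = {v, v + linkVec p k (p k)}) ∧
    (0 : Fin n → ZMod 2) ∉ O ∧
    Odd (((p k).toFinset.filter fun a => (p k).count a = 2 ∧ letterVec p k a ∈ O).card)

lemma mem_totalWord {n : ℕ} {p : Phrase n} {a : ℕ} :
    a ∈ totalWord p ↔ ∃ i, a ∈ p i := by
  simp only [totalWord, List.mem_flatten, List.mem_ofFn]
  constructor
  · rintro ⟨l, ⟨i, rfl⟩, h⟩; exact ⟨i, h⟩
  · rintro ⟨i, h⟩; exact ⟨p i, ⟨i, rfl⟩, h⟩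

lemma count_totalWord {n : ℕ} (p : Phrase n) (a : ℕ) :
    (totalWord p).count a = ∑ i, (p i).count a := by
  rw [totalWord, List.count_flatten, List.map_ofFn]
  exact List.sum_ofFn

lemma mem_betweenWord {w : Word} {a b : ℕ} (h : b ∈ betweenWord w a) : b ∈ w := by
  have h1 := (List.takeWhile_sublist _).subset h
  exact (List.drop_sublist _ _).subset h1

lemma linkVec_congr {n : ℕ} {p q : Phrase n} {k : Fin n} {w : Word}
    (hk : ∀ a ∈ w, ((p k).count a = 2 ↔ (q k).count a = 2))
    (hi : ∀ i, i ≠ k → ∀ a ∈ w, (a ∈ p i ↔ a ∈ q i)) :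
    linkVec p k w = linkVec q k w := by
  funext i
  unfold linkVec
  have heq : (w.toFinset.filter fun a => w.count a = 1 ∧
        (if i = k then (p k).count a = 2 else a ∈ p i)) =
      (w.toFinset.filter fun a => w.count a = 1 ∧
        (if i = k then (q k).count a = 2 else a ∈ q i)) := by
    apply Finset.filter_congr
    intro a ha
    rw [List.mem_toFinset] at ha
    rcases eq_or_ne i k with rfl | hik
    · simp [hk a ha]
    · simp [hik, hi i hik a ha]
  rw [heq]

lemma linkVec_append {n : ℕ} (p : Phrase n) (k : Fin n) (x y : Word)
    (hdisj : ∀ a, a ∈ x → a ∉ y) :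
    linkVec p k (x ++ y) = linkVec p k x + linkVec p k y := by
  funext i
  unfold linkVec
  have htf : (x ++ y).toFinset = x.toFinset ∪ y.toFinset := List.toFinset_append
  have hfilter : ((x ++ y).toFinset.filter fun a => (x ++ y).count a = 1 ∧
        (if i = k then (p k).count a = 2 else a ∈ p i)) =
      (x.toFinset.filter fun a => x.count a = 1 ∧
        (if i = k then (p k).count a = 2 else a ∈ p i)) ∪
      (y.toFinset.filter fun a => y.count a = 1 ∧
        (if i = k then (p k).count a = 2 else a ∈ p i)) := by
    rw [htf, Finset.filter_union]
    congr 1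
    · apply Finset.filter_congr
      intro a ha
      rw [List.mem_toFinset] at ha
      simp [List.count_append, List.count_eq_zero.mpr (hdisj a ha)]
    · apply Finset.filter_congr
      intro a ha
      rw [List.mem_toFinset] at ha
      have : a ∉ x := fun hx => hdisj a hx ha
      simp [List.count_append, List.count_eq_zero.mpr this]
  rw [hfilter, Finset.card_union_of_disjoint, Nat.cast_add]
  · simp
  · apply Finset.disjoint_filter_filter
    rw [Finset.disjoint_left]
    intro a hax hay
    rw [List.mem_toFinset] at hax hay
    exact hdisj a hax hay


lemma takeWhile_append_cons (a : ℕ) (y z : List ℕ) (hy : a ∉ y) :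
    (y ++ a :: z).takeWhile (fun b => b ≠ a) = y := by
  induction y with
  | nil => simp [List.takeWhile]
  | cons b t ih =>
      simp only [List.mem_cons, not_or] at hy
      rw [List.cons_append, List.takeWhile_cons_of_pos (by simpa using (fun e => hy.1 e.symm : ¬ b = a)), ih hy.2]

lemma indexOf_append_cons (a : ℕ) (x z : List ℕ) (hx : a ∉ x) :
    (x ++ a :: z).idxOf a = x.length := by
  induction x with
  | nil => simp
  | cons b t ih =>
      simp only [List.mem_cons, not_or] at hx
      rw [List.cons_append, List.idxOf_cons_ne _ (fun e => hx.1 e.symm), ih hx.2]; rfl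

lemma betweenWord_eq (x y z : List ℕ) (a : ℕ) (hx : a ∉ x) (hy : a ∉ y) :
    betweenWord (x ++ a :: (y ++ a :: z)) a = y := by
  rw [betweenWord, indexOf_append_cons a x _ hx]
  have h2 : (x ++ a :: (y ++ a :: z)).drop (x.length + 1) = y ++ a :: z := by
    have := List.drop_left (l₁ := x ++ [a]) (l₂ := y ++ a :: z)
    simpa using this
  rw [h2, takeWhile_append_cons a y z hy]

lemma mem_split_first {a : ℕ} {w : List ℕ} (h : a ∈ w) :
    ∃ s t, w = s ++ a :: t ∧ a ∉ s := by
  induction w with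
  | nil => simp at h
  | cons b t ih =>
      rcases eq_or_ne a b with rfl | hne
      · exact ⟨[], t, rfl, by simp⟩
      · obtain ⟨s, t', rfl, hs⟩ := ih (by simpa [hne] using h)
        exact ⟨b :: s, t', rfl, by simp [hne, hs]⟩

lemma count_two_decomp {w : List ℕ} {a : ℕ} (h : w.count a = 2) :
    ∃ x y z : List ℕ, w = x ++ a :: (y ++ a :: z) ∧ a ∉ x ∧ a ∉ y ∧ a ∉ z := by
  have ha : a ∈ w := by rw [← List.count_pos_iff]; omega
  obtain ⟨x, t, rfl, hx⟩ := mem_split_first ha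
  have ht : t.count a = 1 := by
    have := h
    rw [List.count_append, List.count_cons_self] at this
    rw [List.count_eq_zero.mpr hx] at this; omega
  have ha2 : a ∈ t := by rw [← List.count_pos_iff]; omega
  obtain ⟨y, z, rfl, hy⟩ := mem_split_first ha2
  have hz : a ∉ z := by
    rw [List.count_append, List.count_cons_self, List.count_eq_zero.mpr hy] at ht
    rw [← List.count_eq_zero]; omega
  exact ⟨x, y, z, rfl, hx, hy, hz⟩


def scCount {n : ℕ} (p : Phrase n) (k : Fin n) (v : Fin n → ZMod 2) : ℕ :=
  ((p k).toFinset.filter fun a => (p k).count a = 2 ∧ letterVec p k a = v).card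

lemma mem_Bk {n : ℕ} {p : Phrase n} {k : Fin n} {v : Fin n → ZMod 2} :
    v ∈ Bk p k ↔ v ≠ 0 ∧ Odd (scCount p k v) := by
  simp [Bk, scCount]

lemma betweenWord_append_left {u g : Word} {a : ℕ} (h : u.count a = 2) :
    betweenWord (u ++ g) a = betweenWord u a := by
  obtain ⟨x, y, z, rfl, hx, hy, hz⟩ := count_two_decomp h
  rw [betweenWord_eq x y z a hx hy]
  have h2 : (x ++ a :: (y ++ a :: z)) ++ g = x ++ a :: (y ++ a :: (z ++ g)) := by simp
  rw [h2, betweenWord_eq x y (z ++ g) a hx hy]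

lemma betweenWord_append_right {u g : Word} {a : ℕ} (hu : a ∉ u) (h : g.count a = 2) :
    betweenWord (u ++ g) a = betweenWord g a := by
  obtain ⟨x, y, z, rfl, hx, hy, hz⟩ := count_two_decomp h
  rw [betweenWord_eq x y z a hx hy, ← List.append_assoc,
    betweenWord_eq (u ++ x) y z a (by simp [hu, hx]) hy]

section Extend

variable {n : ℕ} {p g : Phrase n} {k : Fin n}

lemma fresh_notin (hfresh : ∀ a ∈ totalWord g, a ∉ totalWord p) {i j : Fin n} {a : ℕ}
    (ha : a ∈ p i) : a ∉ g j :=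
  fun hgj => hfresh a (mem_totalWord.mpr ⟨j, hgj⟩) (mem_totalWord.mpr ⟨i, ha⟩)

lemma extend_gauss (hp : IsGaussPhrase p) (hg : IsGaussPhrase g)
    (hfresh : ∀ a ∈ totalWord g, a ∉ totalWord p) :
    IsGaussPhrase (fun i => p i ++ g i) := by
  intro a ha
  have hsplit : (totalWord (fun i => p i ++ g i)).count a
      = (totalWord p).count a + (totalWord g).count a := by
    rw [count_totalWord, count_totalWord, count_totalWord, ← Finset.sum_add_distrib]
    exact Finset.sum_congr rfl fun i _ => List.count_append (a := a) (l₁ := p i) (l₂ := g i)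
  obtain ⟨i, hi⟩ := mem_totalWord.mp ha
  rw [List.mem_append] at hi
  rcases hi with hi | hi
  · have hap : a ∈ totalWord p := mem_totalWord.mpr ⟨i, hi⟩
    have hag : a ∉ totalWord g := fun h => hfresh a h hap
    rw [hsplit, hp a hap, List.count_eq_zero.mpr hag]
  · have hag : a ∈ totalWord g := mem_totalWord.mpr ⟨i, hi⟩
    have hap : a ∉ totalWord p := hfresh a hag
    rw [hsplit, hg a hag, List.count_eq_zero.mpr hap]

lemma extend_off (hpo : ∀ i : Fin n, i ≠ k → ∀ a : ℕ, (p i).count a ≤ 1)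
    (hgo : ∀ i : Fin n, i ≠ k → ∀ a : ℕ, (g i).count a ≤ 1)
    (hfresh : ∀ a ∈ totalWord g, a ∉ totalWord p) :
    ∀ i : Fin n, i ≠ k → ∀ a : ℕ, ((fun i => p i ++ g i) i).count a ≤ 1 := by
  intro i hik a
  simp only [List.count_append]
  by_cases hap : a ∈ p i
  · have : a ∉ g i := fresh_notin hfresh hap
    rw [List.count_eq_zero.mpr this]
    simpa using hpo i hik a
  · rw [List.count_eq_zero.mpr hap]
    simpa using hgo i hik a

lemma extend_letterVec_old (hfresh : ∀ a ∈ totalWord g, a ∉ totalWord p)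
    {a : ℕ} (ha : a ∈ p k) (h2 : (p k).count a = 2) :
    letterVec (fun i => p i ++ g i) k a = letterVec p k a := by
  unfold letterVec
  have hbw : betweenWord (p k ++ g k) a = betweenWord (p k) a := betweenWord_append_left h2
  simp only [hbw]
  apply linkVec_congr
  · intro b hb
    have hbp : b ∈ p k := mem_betweenWord hb
    have : b ∉ g k := fresh_notin hfresh hbp
    simp [List.count_append, List.count_eq_zero.mpr this]
  · intro i hik b hb
    have hbp : b ∈ p k := mem_betweenWord hb
    have : b ∉ g i := fresh_notin hfresh hbp
    simp [List.mem_append, this]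

lemma extend_letterVec_new (hfresh : ∀ a ∈ totalWord g, a ∉ totalWord p)
    {a : ℕ} (ha : a ∈ g k) (h2 : (g k).count a = 2) :
    letterVec (fun i => p i ++ g i) k a = letterVec g k a := by
  unfold letterVec
  have hap : a ∉ p k := fun h => hfresh a (mem_totalWord.mpr ⟨k, ha⟩) (mem_totalWord.mpr ⟨k, h⟩)
  have hbw : betweenWord (p k ++ g k) a = betweenWord (g k) a := betweenWord_append_right hap h2
  simp only [hbw]
  apply linkVec_congr
  · intro b hb
    have hbg : b ∈ g k := mem_betweenWord hb
    have : b ∉ p k := fun h => hfresh b (mem_totalWord.mpr ⟨k, hbg⟩) (mem_totalWord.mpr ⟨k, h⟩)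
    simp [List.count_append, List.count_eq_zero.mpr this]
  · intro i hik b hb
    have hbg : b ∈ g k := mem_betweenWord hb
    have : b ∉ p i := fun h => hfresh b (mem_totalWord.mpr ⟨k, hbg⟩) (mem_totalWord.mpr ⟨i, h⟩)
    simp [List.mem_append, this]

lemma extend_scCount (hfresh : ∀ a ∈ totalWord g, a ∉ totalWord p)
    (u : Fin n → ZMod 2) :
    scCount (fun i => p i ++ g i) k u = scCount p k u + scCount g k u := by
  unfold scCount
  have htf : (p k ++ g k).toFinset = (p k).toFinset ∪ (g k).toFinset := List.toFinset_append
  have hfilter : ((p k ++ g k).toFinset.filter fun a => (p k ++ g k).count a = 2 ∧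
        letterVec (fun i => p i ++ g i) k a = u)
      = ((p k).toFinset.filter fun a => (p k).count a = 2 ∧ letterVec p k a = u)
      ∪ ((g k).toFinset.filter fun a => (g k).count a = 2 ∧ letterVec g k a = u) := by
    simp only [htf, Finset.filter_union]
    congr 1
    · apply Finset.filter_congr
      intro a ha
      rw [List.mem_toFinset] at ha
      have hng : a ∉ g k := fresh_notin hfresh ha
      have hc : (p k ++ g k).count a = (p k).count a := by
        simp [List.count_append, List.count_eq_zero.mpr hng]
      rw [hc]
      constructor
      · rintro ⟨h2, hv⟩
        exact ⟨h2, by rw [← extend_letterVec_old hfresh ha h2]; exact hv⟩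
      · rintro ⟨h2, hv⟩
        exact ⟨h2, by rw [extend_letterVec_old hfresh ha h2]; exact hv⟩
    · apply Finset.filter_congr
      intro a ha
      rw [List.mem_toFinset] at ha
      have hnp : a ∉ p k := fun h => hfresh a (mem_totalWord.mpr ⟨k, ha⟩) (mem_totalWord.mpr ⟨k, h⟩)
      have hc : (p k ++ g k).count a = (g k).count a := by
        rw [List.count_append, List.count_eq_zero.mpr hnp, Nat.zero_add]
      rw [hc]
      constructor
      · rintro ⟨h2, hv⟩
        exact ⟨h2, by rw [← extend_letterVec_new hfresh ha h2]; exact hv⟩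
      · rintro ⟨h2, hv⟩
        exact ⟨h2, by rw [extend_letterVec_new hfresh ha h2]; exact hv⟩
  show ((p k ++ g k).toFinset.filter _).card = _
  rw [hfilter, Finset.card_union_of_disjoint]
  apply Finset.disjoint_filter_filter
  rw [Finset.disjoint_left]
  intro a hap hag
  rw [List.mem_toFinset] at hap hag
  exact fresh_notin hfresh hap hag

end Extend

def crossList {n : ℕ} (k : Fin n) (v : Fin n → ZMod 2) (N : ℕ) : Word :=
  (List.finRange n).filterMap fun i => if i ≠ k ∧ v i = 1 then some (N + i.val) else none

lemma mem_crossList {n : ℕ} {k : Fin n} {v : Fin n → ZMod 2} {N a : ℕ} :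
    a ∈ crossList k v N ↔ ∃ i : Fin n, i ≠ k ∧ v i = 1 ∧ a = N + i.val := by
  simp only [crossList, List.mem_filterMap, List.mem_finRange, true_and]
  constructor
  · rintro ⟨i, hi⟩
    by_cases h : i ≠ k ∧ v i = 1
    · rw [if_pos h] at hi
      exact ⟨i, h.1, h.2, (Option.some_injective _ hi).symm⟩
    · rw [if_neg h] at hi; exact absurd hi (by simp)
  · rintro ⟨i, h1, h2, rfl⟩
    exact ⟨i, by rw [if_pos ⟨h1, h2⟩]⟩

lemma crossList_ge {n : ℕ} {k : Fin n} {v : Fin n → ZMod 2} {N a : ℕ}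
    (h : a ∈ crossList k v N) : N ≤ a := by
  obtain ⟨i, _, _, rfl⟩ := mem_crossList.mp h; omega

lemma crossList_lt {n : ℕ} {k : Fin n} {v : Fin n → ZMod 2} {N a : ℕ}
    (h : a ∈ crossList k v N) : a < N + n := by
  obtain ⟨i, _, _, rfl⟩ := mem_crossList.mp h
  have := i.isLt; omega

lemma nodup_crossList {n : ℕ} (k : Fin n) (v : Fin n → ZMod 2) (N : ℕ) :
    (crossList k v N).Nodup := by
  apply List.Nodup.filterMap _ (List.nodup_finRange n)
  intro i j a hi hj
  by_cases h1 : i ≠ k ∧ v i = 1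
  · rw [if_pos h1] at hi
    by_cases h2 : j ≠ k ∧ v j = 1
    · rw [if_pos h2] at hj
      have : N + i.val = N + j.val := by
        rw [Option.some_injective _ hi, Option.some_injective _ hj]
      exact Fin.ext (by omega)
    · rw [if_neg h2] at hj; exact absurd hj (by simp)
  · rw [if_neg h1] at hi; exact absurd hi (by simp)

lemma count_crossList {n : ℕ} {k : Fin n} {v : Fin n → ZMod 2} {N a : ℕ}
    (h : a ∈ crossList k v N) : (crossList k v N).count a = 1 :=
  List.count_eq_one_of_mem (nodup_crossList k v N) h

lemma mem_crossList_base {n : ℕ} {k : Fin n} {v : Fin n → ZMod 2} {N : ℕ} {j : Fin n} :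
    N + j.val ∈ crossList k v N ↔ j ≠ k ∧ v j = 1 := by
  rw [mem_crossList]
  constructor
  · rintro ⟨i, h1, h2, he⟩
    have : i = j := Fin.ext (by omega)
    subst this; exact ⟨h1, h2⟩
  · rintro ⟨h1, h2⟩; exact ⟨j, h1, h2, rfl⟩

lemma linkVec_cross {n : ℕ} (G : Phrase n) (k : Fin n) (v : Fin n → ZMod 2) (N : ℕ)
    (hGk : ∀ a ∈ crossList k v N, (G k).count a ≠ 2)
    (hGi : ∀ i : Fin n, i ≠ k → ∀ a ∈ crossList k v N, (a ∈ G i ↔ a = N + i.val ∧ v i = 1)) :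
    ∀ i, linkVec G k (crossList k v N) i = if i = k then 0 else v i := by
  intro i
  unfold linkVec
  rcases eq_or_ne i k with rfl | hik
  · rw [if_pos rfl]
    have : ((crossList i v N).toFinset.filter fun a => (crossList i v N).count a = 1 ∧
        (if i = i then (G i).count a = 2 else a ∈ G i)) = ∅ := by
      rw [Finset.filter_eq_empty_iff]
      intro a ha
      rw [List.mem_toFinset] at ha
      simp only [if_pos rfl]
      exact fun h => hGk a ha h.2
    rw [this]; simp
  · rw [if_neg hik]
    have hset : ((crossList k v N).toFinset.filter fun a => (crossList k v N).count a = 1 ∧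
        (if i = k then (G k).count a = 2 else a ∈ G i)) =
        if v i = 1 then {N + i.val} else ∅ := by
      rcases eq_or_ne (v i) 1 with hv | hv
      · rw [if_pos hv]
        apply Finset.ext
        intro a
        simp only [Finset.mem_filter, List.mem_toFinset, Finset.mem_singleton, if_neg hik]
        constructor
        · rintro ⟨ha, _, hmem⟩
          exact ((hGi i hik a ha).mp hmem).1
        · rintro rfl
          have hm : N + i.val ∈ crossList k v N := mem_crossList_base.mpr ⟨hik, hv⟩
          exact ⟨hm, count_crossList hm, (hGi i hik _ hm).mpr ⟨rfl, hv⟩⟩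
      · rw [if_neg hv, Finset.filter_eq_empty_iff]
        intro a ha
        rw [List.mem_toFinset] at ha
        simp only [if_neg hik, not_and]
        intro _ hmem
        exact hv ((hGi i hik a ha).mp hmem).2
    rw [hset]
    rcases eq_or_ne (v i) 1 with hv | hv
    · rw [if_pos hv, hv]; simp
    · rw [if_neg hv]
      have : v i = 0 := by
        have : ∀ x : ZMod 2, x ≠ 1 → x = 0 := by decide
        exact this _ hv
      rw [this]; simp

lemma linkVec_single {n : ℕ} (G : Phrase n) (k : Fin n) (X : ℕ)
    (h2 : (G k).count X = 2) (hX : ∀ i : Fin n, i ≠ k → X ∉ G i) :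
    ∀ i, linkVec G k [X] i = if i = k then 1 else 0 := by
  intro i
  unfold linkVec
  rcases eq_or_ne i k with rfl | hik
  · rw [if_pos rfl]
    have : (([X] : Word).toFinset.filter fun a => ([X] : Word).count a = 1 ∧
        (if i = i then (G i).count a = 2 else a ∈ G i)) = {X} := by
      apply Finset.ext; intro a
      simp only [Finset.mem_filter, List.mem_toFinset, List.mem_singleton,
        Finset.mem_singleton, if_pos rfl]
      constructor
      · rintro ⟨ha, _⟩; exact ha
      · rintro rfl; exact ⟨rfl, by simp, h2⟩
    rw [this]; simp
  · rw [if_neg hik]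
    have : (([X] : Word).toFinset.filter fun a => ([X] : Word).count a = 1 ∧
        (if i = k then (G k).count a = 2 else a ∈ G i)) = ∅ := by
      rw [Finset.filter_eq_empty_iff]
      intro a ha
      rw [List.mem_toFinset, List.mem_singleton] at ha
      subst ha
      simp only [if_neg hik, not_and]
      exact fun _ => hX i hik
    rw [this]; simp

def gadget1 {n : ℕ} (k : Fin n) (v : Fin n → ZMod 2) (N : ℕ) : Phrase n := fun i =>
  if i = k then (N + n) :: (crossList k v N ++ [N + n])
  else if v i = 1 then [N + i.val] else []

section Gadget1

variable {n : ℕ} {k : Fin n} {v : Fin n → ZMod 2} {N : ℕ}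

lemma g1_A_notin_cl : N + n ∉ crossList k v N := fun h => by
  have := crossList_lt h; omega

lemma g1_k : gadget1 k v N k = (N + n) :: (crossList k v N ++ [N + n]) := if_pos rfl

lemma g1_mem_k {a : ℕ} : a ∈ gadget1 k v N k ↔ a = N + n ∨ a ∈ crossList k v N := by
  rw [g1_k]; simp only [List.mem_cons, List.mem_append, List.mem_singleton]; tauto

lemma g1_count_A : (gadget1 k v N k).count (N + n) = 2 := by
  rw [g1_k]
  simp [List.count_cons, List.count_append, List.count_eq_zero.mpr g1_A_notin_cl]

lemma g1_count_cl {a : ℕ} (h : a ∈ crossList k v N) : (gadget1 k v N k).count a = 1 := by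
  have hne : a ≠ N + n := fun e => g1_A_notin_cl (e ▸ h)
  rw [g1_k]
  simp [List.count_cons, List.count_append, hne, hne.symm, count_crossList h]

lemma g1_ge {a : ℕ} (h : a ∈ totalWord (gadget1 k v N)) : N ≤ a := by
  obtain ⟨i, hi⟩ := mem_totalWord.mp h
  rcases eq_or_ne i k with rfl | hik
  · rcases g1_mem_k.mp hi with rfl | hc
    · omega
    · exact crossList_ge hc
  · rw [gadget1, if_neg hik] at hi
    rcases eq_or_ne (v i) 1 with hv | hv
    · rw [if_pos hv, List.mem_singleton] at hi; omega
    · rw [if_neg hv] at hi; simp at hi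

lemma g1_off : ∀ i : Fin n, i ≠ k → ∀ a : ℕ, ((gadget1 k v N) i).count a ≤ 1 := by
  intro i hik a
  rw [gadget1, if_neg hik]
  rcases eq_or_ne (v i) 1 with hv | hv
  · rw [if_pos hv]; simp [List.count_singleton]; split <;> omega
  · rw [if_neg hv]; simp

lemma g1_mem_off {i : Fin n} (hik : i ≠ k) {a : ℕ} :
    a ∈ gadget1 k v N i ↔ a = N + i.val ∧ v i = 1 := by
  rw [gadget1, if_neg hik]
  rcases eq_or_ne (v i) 1 with hv | hv
  · rw [if_pos hv]; simp [hv]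
  · rw [if_neg hv]; simp [hv]

lemma g1_gauss : IsGaussPhrase (gadget1 k v N) := by
  intro a ha
  rw [count_totalWord, ← Finset.add_sum_erase _ _ (Finset.mem_univ k)]
  obtain ⟨i, hi⟩ := mem_totalWord.mp ha
  have hmem : a = N + n ∨ a ∈ crossList k v N := by
    rcases eq_or_ne i k with rfl | hik
    · exact g1_mem_k.mp hi
    · obtain ⟨rfl, hv⟩ := (g1_mem_off hik).mp hi
      exact Or.inr (mem_crossList_base.mpr ⟨hik, hv⟩)
  rcases hmem with rfl | hc
  · rw [g1_count_A]
    have hz : ∀ i ∈ Finset.univ.erase k, ((gadget1 k v N) i).count (N + n) = 0 := by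
      intro i hi'
      have hik := (Finset.mem_erase.mp hi').1
      rw [List.count_eq_zero]
      intro hmem
      obtain ⟨he, _⟩ := (g1_mem_off hik).mp hmem
      have := i.isLt; omega
    rw [Finset.sum_congr rfl hz]; simp
  · obtain ⟨j, hjk, hvj, rfl⟩ := mem_crossList.mp hc
    rw [g1_count_cl hc]
    have hs : ∀ i ∈ Finset.univ.erase k, ((gadget1 k v N) i).count (N + j.val) =
        if i = j then 1 else 0 := by
      intro i hi'
      have hik := (Finset.mem_erase.mp hi').1
      rcases eq_or_ne i j with rfl | hij
      · rw [if_pos rfl, gadget1, if_neg hik, if_pos hvj, List.count_singleton]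
        simp
      · rw [if_neg hij, List.count_eq_zero]
        intro hmem
        obtain ⟨he, _⟩ := (g1_mem_off hik).mp hmem
        exact hij (Fin.ext (by omega))
    rw [Finset.sum_congr rfl hs, Finset.sum_ite_eq' (Finset.univ.erase k) j fun _ => 1,
      if_pos (Finset.mem_erase.mpr ⟨hjk, Finset.mem_univ j⟩)]

lemma g1_letterVec (hvk : v k = 0) : letterVec (gadget1 k v N) k (N + n) = v := by
  unfold letterVec
  have hbw : betweenWord (gadget1 k v N k) (N + n) = crossList k v N := by
    rw [g1_k]
    have : (N + n) :: (crossList k v N ++ [N + n]) =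
        [] ++ (N + n) :: (crossList k v N ++ (N + n) :: []) := by simp
    rw [this]
    exact betweenWord_eq [] _ [] (N + n) (by simp) g1_A_notin_cl
  rw [hbw]
  funext i
  rw [linkVec_cross (gadget1 k v N) k v N
    (fun a ha h => by rw [g1_count_cl ha] at h; omega)
    (fun i hik a _ => by rw [g1_mem_off hik]) i]
  rcases eq_or_ne i k with rfl | hik
  · rw [if_pos rfl, hvk]
  · rw [if_neg hik]

lemma g1_sc (hvk : v k = 0) (u : Fin n → ZMod 2) :
    scCount (gadget1 k v N) k u = if u = v then 1 else 0 := by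
  unfold scCount
  have hfe : ((gadget1 k v N k).toFinset.filter fun a =>
      (gadget1 k v N k).count a = 2 ∧ letterVec (gadget1 k v N) k a = u) =
      if u = v then {N + n} else ∅ := by
    apply Finset.ext
    intro a
    simp only [Finset.mem_filter, List.mem_toFinset]
    constructor
    · rintro ⟨ha, h2, hv⟩
      rcases g1_mem_k.mp ha with rfl | hc
      · rw [g1_letterVec hvk] at hv
        rw [if_pos hv.symm]; simp
      · rw [g1_count_cl hc] at h2; omega
    · intro ha
      rcases eq_or_ne u v with rfl | huv
      · rw [if_pos rfl, Finset.mem_singleton] at ha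
        subst ha
        exact ⟨g1_mem_k.mpr (Or.inl rfl), g1_count_A, g1_letterVec hvk⟩
      · rw [if_neg huv] at ha; simp at ha
  rw [hfe]
  rcases eq_or_ne u v with rfl | huv
  · rw [if_pos rfl, if_pos rfl, Finset.card_singleton]
  · rw [if_neg huv, if_neg huv, Finset.card_empty]

end Gadget1

def gadget2 {n : ℕ} (k : Fin n) (v w : Fin n → ZMod 2) (N : ℕ) : Phrase n := fun i =>
  if i = k then
    (N + 2*n) :: (crossList k v N ++
      (N + 2*n + 1) :: (N + 2*n) :: (crossList k w (N + n) ++ [N + 2*n + 1]))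
  else (if v i = 1 then [N + i.val] else []) ++ (if w i = 1 then [N + n + i.val] else [])

section Gadget2

variable {n : ℕ} {k : Fin n} {v w : Fin n → ZMod 2} {N : ℕ}

lemma g2_A_notin_Lv : N + 2*n ∉ crossList k v N := fun h => by
  have := crossList_lt h; have := k.isLt; omega

lemma g2_A_notin_Lw : N + 2*n ∉ crossList k w (N + n) := fun h => by
  have := crossList_lt h; omega

lemma g2_B_notin_Lv : N + 2*n + 1 ∉ crossList k v N := fun h => by
  have := crossList_lt h; have := k.isLt; omega

lemma g2_B_notin_Lw : N + 2*n + 1 ∉ crossList k w (N + n) := fun h => by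
  have := crossList_lt h; omega

lemma g2_Lv_notin_Lw {a : ℕ} (h : a ∈ crossList k v N) : a ∉ crossList k w (N + n) :=
  fun h2 => by have := crossList_lt h; have := crossList_ge h2; omega

lemma g2_k : gadget2 k v w N k = (N + 2*n) :: (crossList k v N ++
    (N + 2*n + 1) :: (N + 2*n) :: (crossList k w (N + n) ++ [N + 2*n + 1])) := if_pos rfl

lemma g2_mem_k {a : ℕ} : a ∈ gadget2 k v w N k ↔
    a = N + 2*n ∨ a = N + 2*n + 1 ∨ a ∈ crossList k v N ∨ a ∈ crossList k w (N + n) := by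
  rw [g2_k]
  simp only [List.mem_cons, List.mem_append, List.mem_singleton]; tauto

lemma g2_count_A : (gadget2 k v w N k).count (N + 2*n) = 2 := by
  rw [g2_k]
  simp [List.count_cons, List.count_append, List.count_eq_zero.mpr g2_A_notin_Lv,
    List.count_eq_zero.mpr g2_A_notin_Lw]

lemma g2_count_B : (gadget2 k v w N k).count (N + 2*n + 1) = 2 := by
  rw [g2_k]
  simp [List.count_cons, List.count_append, List.count_eq_zero.mpr g2_B_notin_Lv,
    List.count_eq_zero.mpr g2_B_notin_Lw]

lemma g2_count_Lv {a : ℕ} (h : a ∈ crossList k v N) : (gadget2 k v w N k).count a = 1 := by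
  have h1 : a ≠ N + 2*n := fun e => g2_A_notin_Lv (e ▸ h)
  have h2 : a ≠ N + 2*n + 1 := fun e => g2_B_notin_Lv (e ▸ h)
  have h3 : a ∉ crossList k w (N + n) := g2_Lv_notin_Lw h
  rw [g2_k]
  simp [List.count_cons, List.count_append, h1, h2, h1.symm, h2.symm, count_crossList h,
    List.count_eq_zero.mpr h3]

lemma g2_count_Lw {a : ℕ} (h : a ∈ crossList k w (N + n)) :
    (gadget2 k v w N k).count a = 1 := by
  have h1 : a ≠ N + 2*n := fun e => g2_A_notin_Lw (e ▸ h)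
  have h2 : a ≠ N + 2*n + 1 := fun e => g2_B_notin_Lw (e ▸ h)
  have h3 : a ∉ crossList k v N := fun h' => g2_Lv_notin_Lw h' h
  rw [g2_k]
  simp [List.count_cons, List.count_append, h1, h2, h1.symm, h2.symm, count_crossList h,
    List.count_eq_zero.mpr h3]

lemma g2_mem_off {i : Fin n} (hik : i ≠ k) {a : ℕ} :
    a ∈ gadget2 k v w N i ↔ (a = N + i.val ∧ v i = 1) ∨ (a = N + n + i.val ∧ w i = 1) := by
  rw [gadget2, if_neg hik, List.mem_append]
  constructor
  · rintro (h | h)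
    · rcases eq_or_ne (v i) 1 with hv | hv
      · rw [if_pos hv, List.mem_singleton] at h; exact Or.inl ⟨h, hv⟩
      · rw [if_neg hv] at h; simp at h
    · rcases eq_or_ne (w i) 1 with hw | hw
      · rw [if_pos hw, List.mem_singleton] at h; exact Or.inr ⟨h, hw⟩
      · rw [if_neg hw] at h; simp at h
  · rintro (⟨rfl, hv⟩ | ⟨rfl, hw⟩)
    · exact Or.inl (by rw [if_pos hv]; simp)
    · exact Or.inr (by rw [if_pos hw]; simp)

lemma g2_ge {a : ℕ} (h : a ∈ totalWord (gadget2 k v w N)) : N ≤ a := by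
  obtain ⟨i, hi⟩ := mem_totalWord.mp h
  rcases eq_or_ne i k with rfl | hik
  · rcases g2_mem_k.mp hi with rfl | rfl | hc | hc
    · omega
    · omega
    · exact crossList_ge hc
    · have := crossList_ge hc; omega
  · rcases (g2_mem_off hik).mp hi with ⟨rfl, _⟩ | ⟨rfl, _⟩ <;> omega

lemma g2_off : ∀ i : Fin n, i ≠ k → ∀ a : ℕ, ((gadget2 k v w N) i).count a ≤ 1 := by
  intro i hik a
  rw [gadget2, if_neg hik, List.count_append]
  by_cases ha1 : a = N + i.val
  · subst ha1
    have hno : N + i.val ∉ (if w i = 1 then [N + n + i.val] else []) := by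
      have := i.isLt; split <;> simp <;> omega
    rw [List.count_eq_zero.mpr hno]
    have hle := List.count_le_length (a := N + i.val) (l := if v i = 1 then [N + i.val] else [])
    have hlen : (if v i = 1 then [N + i.val] else []).length ≤ 1 := by split <;> simp
    omega
  · have hno : a ∉ (if v i = 1 then [N + i.val] else []) := by split <;> simp [ha1]
    rw [List.count_eq_zero.mpr hno]
    have hle := List.count_le_length (a := a) (l := if w i = 1 then [N + n + i.val] else [])
    have hlen : (if w i = 1 then [N + n + i.val] else []).length ≤ 1 := by split <;> simp
    omega

lemma g2_gauss : IsGaussPhrase (gadget2 k v w N) := by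
  intro a ha
  rw [count_totalWord, ← Finset.add_sum_erase _ _ (Finset.mem_univ k)]
  obtain ⟨i, hi⟩ := mem_totalWord.mp ha
  have hmem : a = N + 2*n ∨ a = N + 2*n + 1 ∨
      a ∈ crossList k v N ∨ a ∈ crossList k w (N + n) := by
    rcases eq_or_ne i k with rfl | hik
    · exact g2_mem_k.mp hi
    · rcases (g2_mem_off hik).mp hi with ⟨rfl, hv⟩ | ⟨rfl, hw⟩
      · exact Or.inr (Or.inr (Or.inl (mem_crossList_base.mpr ⟨hik, hv⟩)))
      · exact Or.inr (Or.inr (Or.inr (mem_crossList_base.mpr ⟨hik, hw⟩)))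
  have hoffzero : ∀ b : ℕ, (∀ j : Fin n, b ≠ N + j.val ∧ b ≠ N + n + j.val) →
      ∀ i ∈ Finset.univ.erase k, ((gadget2 k v w N) i).count b = 0 := by
    intro b hb i hi'
    have hik := (Finset.mem_erase.mp hi').1
    rw [List.count_eq_zero]
    intro hmem'
    rcases (g2_mem_off hik).mp hmem' with ⟨he, _⟩ | ⟨he, _⟩
    · exact (hb i).1 he
    · exact (hb i).2 he
  rcases hmem with rfl | rfl | hc | hc
  · rw [g2_count_A, Finset.sum_congr rfl (hoffzero _ (fun j => by have := j.isLt; omega))]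
    simp
  · rw [g2_count_B, Finset.sum_congr rfl (hoffzero _ (fun j => by have := j.isLt; omega))]
    simp
  · obtain ⟨j, hjk, hvj, rfl⟩ := mem_crossList.mp hc
    rw [g2_count_Lv hc]
    have hs : ∀ i ∈ Finset.univ.erase k, ((gadget2 k v w N) i).count (N + j.val) =
        if i = j then 1 else 0 := by
      intro i hi'
      have hik := (Finset.mem_erase.mp hi').1
      rcases eq_or_ne i j with rfl | hij
      · rw [if_pos rfl, gadget2, if_neg hik, if_pos hvj, List.count_append]
        have : N + i.val ∉ (if w i = 1 then [N + n + i.val] else []) := by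
          split <;> simp <;> (have := i.isLt; omega)
        rw [List.count_eq_zero.mpr this]
        simp
      · rw [if_neg hij, List.count_eq_zero]
        intro hmem'
        rcases (g2_mem_off hik).mp hmem' with ⟨he, _⟩ | ⟨he, _⟩
        · exact hij (Fin.ext (by omega))
        · have := j.isLt; omega
    rw [Finset.sum_congr rfl hs, Finset.sum_ite_eq' (Finset.univ.erase k) j fun _ => 1,
      if_pos (Finset.mem_erase.mpr ⟨hjk, Finset.mem_univ j⟩)]
  · obtain ⟨j, hjk, hwj, rfl⟩ := mem_crossList.mp hc
    rw [g2_count_Lw hc]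
    have hs : ∀ i ∈ Finset.univ.erase k, ((gadget2 k v w N) i).count (N + n + j.val) =
        if i = j then 1 else 0 := by
      intro i hi'
      have hik := (Finset.mem_erase.mp hi').1
      rcases eq_or_ne i j with rfl | hij
      · rw [if_pos rfl, gadget2, if_neg hik, List.count_append, if_pos hwj]
        have : N + n + i.val ∉ (if v i = 1 then [N + i.val] else []) := by
          split <;> simp <;> (have := i.isLt; omega)
        rw [List.count_eq_zero.mpr this]
        simp
      · rw [if_neg hij, List.count_eq_zero]
        intro hmem'
        rcases (g2_mem_off hik).mp hmem' with ⟨he, _⟩ | ⟨he, _⟩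
        · have := i.isLt; omega
        · exact hij (Fin.ext (by omega))
    rw [Finset.sum_congr rfl hs, Finset.sum_ite_eq' (Finset.univ.erase k) j fun _ => 1,
      if_pos (Finset.mem_erase.mpr ⟨hjk, Finset.mem_univ j⟩)]



lemma g2_letterVec_A (hvk : v k = 1) : letterVec (gadget2 k v w N) k (N + 2*n) = v := by
  unfold letterVec
  have hbw : betweenWord (gadget2 k v w N k) (N + 2*n) =
      crossList k v N ++ [N + 2*n + 1] := by
    rw [g2_k]
    have hsh : (N + 2*n) :: (crossList k v N ++
        (N + 2*n + 1) :: (N + 2*n) :: (crossList k w (N + n) ++ [N + 2*n + 1])) =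
        [] ++ (N + 2*n) :: ((crossList k v N ++ [N + 2*n + 1]) ++
          (N + 2*n) :: (crossList k w (N + n) ++ (N + 2*n + 1) :: [])) := by simp
    rw [hsh]
    exact betweenWord_eq [] _ _ (N + 2*n) (by simp)
      (by
        intro hmem
        rcases List.mem_append.mp hmem with h | h
        · exact g2_A_notin_Lv h
        · rw [List.mem_singleton] at h; omega)
  rw [hbw, linkVec_append _ _ _ _ (fun a ha hb => by
    rw [List.mem_singleton] at hb; exact g2_B_notin_Lv (hb ▸ ha))]
  funext i
  have hcross := linkVec_cross (gadget2 k v w N) k v N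
    (fun a ha h => by rw [g2_count_Lv ha] at h; omega)
    (fun i hik a ha => by
      rw [g2_mem_off hik]
      have hlt := crossList_lt ha
      constructor
      · rintro (⟨he, hv⟩ | ⟨he, _⟩)
        · exact ⟨he, hv⟩
        · exfalso; have := i.isLt; omega
      · rintro ⟨he, hv⟩; exact Or.inl ⟨he, hv⟩) i
  have hsingle := linkVec_single (gadget2 k v w N) k (N + 2*n + 1) g2_count_B
    (fun i hik hmem => by
      rcases (g2_mem_off hik).mp hmem with ⟨he, _⟩ | ⟨he, _⟩ <;>
        (have := i.isLt; omega)) i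
  rw [Pi.add_apply, hcross, hsingle]
  rcases eq_or_ne i k with rfl | hik
  · rw [if_pos rfl, if_pos rfl, hvk]; ring
  · rw [if_neg hik, if_neg hik, add_zero]

lemma g2_letterVec_B (hwk : w k = 1) : letterVec (gadget2 k v w N) k (N + 2*n + 1) = w := by
  unfold letterVec
  have hbw : betweenWord (gadget2 k v w N k) (N + 2*n + 1) =
      [N + 2*n] ++ crossList k w (N + n) := by
    rw [g2_k]
    have hsh : (N + 2*n) :: (crossList k v N ++
        (N + 2*n + 1) :: (N + 2*n) :: (crossList k w (N + n) ++ [N + 2*n + 1])) =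
        ((N + 2*n) :: crossList k v N) ++ (N + 2*n + 1) ::
          (((N + 2*n) :: crossList k w (N + n)) ++ (N + 2*n + 1) :: []) := by simp
    rw [hsh]
    refine betweenWord_eq _ _ _ (N + 2*n + 1) ?_ ?_
    · intro hmem
      rcases List.mem_cons.mp hmem with h | h
      · omega
      · exact g2_B_notin_Lv h
    · intro hmem
      rcases List.mem_cons.mp hmem with h | h
      · omega
      · exact g2_B_notin_Lw h
  rw [hbw, linkVec_append _ _ _ _ (fun a ha hb => by
    rw [List.mem_singleton] at ha; exact g2_A_notin_Lw (ha ▸ hb))]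
  funext i
  have hcross := linkVec_cross (gadget2 k v w N) k w (N + n)
    (fun a ha h => by rw [g2_count_Lw ha] at h; omega)
    (fun i hik a ha => by
      rw [g2_mem_off hik]
      have hge := crossList_ge ha
      constructor
      · rintro (⟨he, _⟩ | ⟨he, hw⟩)
        · exfalso; have := i.isLt; omega
        · exact ⟨he, hw⟩
      · rintro ⟨he, hw⟩; exact Or.inr ⟨he, hw⟩) i
  have hsingle := linkVec_single (gadget2 k v w N) k (N + 2*n) g2_count_A
    (fun i hik hmem => by
      rcases (g2_mem_off hik).mp hmem with ⟨he, _⟩ | ⟨he, _⟩ <;>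
        (have := i.isLt; omega)) i
  rw [Pi.add_apply, hsingle, hcross]
  rcases eq_or_ne i k with rfl | hik
  · rw [if_pos rfl, if_pos rfl, hwk]; ring
  · rw [if_neg hik, if_neg hik, zero_add]

lemma g2_sc (hvk : v k = 1) (hwk : w k = 1) (u : Fin n → ZMod 2) :
    scCount (gadget2 k v w N) k u =
      (if u = v then 1 else 0) + (if u = w then 1 else 0) := by
  unfold scCount
  have hfe : ((gadget2 k v w N k).toFinset.filter fun a =>
      (gadget2 k v w N k).count a = 2 ∧ letterVec (gadget2 k v w N) k a = u) =
      (if u = v then {N + 2*n} else ∅) ∪ (if u = w then {N + 2*n + 1} else ∅) := by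
    apply Finset.ext
    intro a
    simp only [Finset.mem_filter, List.mem_toFinset, Finset.mem_union]
    constructor
    · rintro ⟨ha, h2, hv⟩
      rcases g2_mem_k.mp ha with rfl | rfl | hc | hc
      · rw [g2_letterVec_A hvk] at hv
        left; rw [if_pos hv.symm]; simp
      · rw [g2_letterVec_B hwk] at hv
        right; rw [if_pos hv.symm]; simp
      · rw [g2_count_Lv hc] at h2; omega
      · rw [g2_count_Lw hc] at h2; omega
    · rintro (ha | ha)
      · rcases eq_or_ne u v with rfl | huv
        · rw [if_pos rfl, Finset.mem_singleton] at ha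
          subst ha
          exact ⟨g2_mem_k.mpr (Or.inl rfl), g2_count_A, g2_letterVec_A hvk⟩
        · rw [if_neg huv] at ha; simp at ha
      · rcases eq_or_ne u w with rfl | huw
        · rw [if_pos rfl, Finset.mem_singleton] at ha
          subst ha
          exact ⟨g2_mem_k.mpr (Or.inr (Or.inl rfl)), g2_count_B, g2_letterVec_B hwk⟩
        · rw [if_neg huw] at ha; simp at ha
  rw [hfe]
  have hAB : (N + 2*n) ≠ (N + 2*n + 1) := by omega
  rcases eq_or_ne u v with rfl | huv <;> rcases eq_or_ne u w with h | huw
  · rw [if_pos rfl, if_pos h, if_pos rfl, if_pos h]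
    rw [Finset.card_union_of_disjoint (by simp [hAB])]
    simp
  · rw [if_pos rfl, if_neg huw, if_pos rfl, if_neg huw]
    simp
  · rw [if_neg huv, if_pos h, if_neg huv, if_pos h]
    simp
  · rw [if_neg huv, if_neg huw, if_neg huv, if_neg huw]
    simp

end Gadget2

lemma exists_bound (l : List ℕ) : ∃ N, ∀ a ∈ l, a < N := by
  induction l with
  | nil => exact ⟨0, by simp⟩
  | cons b t ih =>
      obtain ⟨N, hN⟩ := ih
      refine ⟨max (b + 1) N, ?_⟩
      intro a ha
      rcases List.mem_cons.mp ha with rfl | ha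
      · omega
      · exact lt_of_lt_of_le (hN a ha) (le_max_right _ _)

theorem Bk_realizable' {n : ℕ} (k : Fin n) (B : Finset (Fin n → ZMod 2))
    (h0 : (0 : Fin n → ZMod 2) ∉ B)
    (hev : Even ((B.filter fun v => v k = 1).card)) :
    ∃ p : Phrase n, IsGaussPhrase p ∧ Bk p k = B ∧
      ∀ i : Fin n, i ≠ k → ∀ a : ℕ, (p i).count a ≤ 1 := by
  classical
  induction B using Finset.strongInduction with
  | _ B ih =>
  by_cases hFne : (B.filter fun u => u k = 1).Nonempty
  · -- there is a k-odd vector; pick two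
    obtain ⟨v, hvF⟩ := hFne
    have hc2 : 1 < (B.filter fun u => u k = 1).card := by
      have h1 : 1 ≤ (B.filter fun u => u k = 1).card := Finset.card_pos.mpr ⟨v, hvF⟩
      obtain ⟨t, ht⟩ := hev
      rw [ht] at h1 ⊢
      clear ht
      omega
    obtain ⟨w, hwF, hwv⟩ := Finset.exists_mem_ne hc2 v
    clear hc2
    obtain ⟨hvB, hvk⟩ := Finset.mem_filter.mp hvF
    obtain ⟨hwB, hwk⟩ := Finset.mem_filter.mp hwF
    set B' := (B.erase v).erase w with hB'
    have hwB' : w ∈ B.erase v := Finset.mem_erase.mpr ⟨hwv, hwB⟩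
    have hsub : B' ⊂ B := by
      refine Finset.ssubset_of_ssubset_of_subset ?_ (Finset.erase_subset v B)
      exact Finset.erase_ssubset hwB'
    have h0' : (0 : Fin n → ZMod 2) ∉ B' :=
      fun h => h0 (Finset.mem_of_mem_erase (Finset.mem_of_mem_erase h))
    have hev' : Even ((B'.filter fun u => u k = 1).card) := by
      have he : B'.filter (fun u => u k = 1) =
          ((B.filter fun u => u k = 1).erase v).erase w := by
        rw [hB', Finset.filter_erase, Finset.filter_erase]
      have hvF' : v ∈ B.filter fun u => u k = 1 := hvF
      have hwm : w ∈ (B.filter fun u => u k = 1).erase v :=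
        Finset.mem_erase.mpr ⟨hwv, hwF⟩
      have hpos : 0 < ((B.filter fun u => u k = 1).erase v).card :=
        Finset.card_pos.mpr ⟨w, hwm⟩
      rw [Finset.card_erase_of_mem hvF'] at hpos
      rw [he, Finset.card_erase_of_mem hwm, Finset.card_erase_of_mem hvF']
      obtain ⟨t, ht⟩ := hev
      rw [ht] at hpos ⊢
      clear ht
      exact ⟨t - 1, by omega⟩
    obtain ⟨p, hpg, hpb, hpo⟩ := ih B' hsub h0' hev'
    obtain ⟨N, hN⟩ := exists_bound (totalWord p)
    have hfresh : ∀ a ∈ totalWord (gadget2 k v w N), a ∉ totalWord p :=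
      fun a ha hp => by have := g2_ge ha; have := hN a hp; omega
    refine ⟨fun i => p i ++ gadget2 k v w N i,
      extend_gauss hpg g2_gauss hfresh, ?_, extend_off hpo g2_off hfresh⟩
    have hmem : ∀ u, u ∈ B' ↔ u ≠ 0 ∧ Odd (scCount p k u) := fun u => by
      rw [← hpb, mem_Bk]
    apply Finset.ext
    intro u
    rw [mem_Bk, extend_scCount hfresh u, g2_sc hvk hwk u]
    rcases eq_or_ne u v with rfl | huv
    · rw [if_pos rfl, if_neg hwv.symm]
      have hv0 : u ≠ 0 := fun h => h0 (h ▸ hvB)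
      have hnB' : u ∉ B' := fun h =>
        Finset.notMem_erase u (B.erase w) (by
          rw [hB', Finset.erase_right_comm] at h; exact h)
      have heven : ¬ Odd (scCount p k u) := fun ho => hnB' ((hmem u).mpr ⟨hv0, ho⟩)
      rw [Nat.not_odd_iff_even] at heven
      obtain ⟨t, ht⟩ := heven
      refine iff_of_true ⟨hv0, ?_⟩ hvB
      rw [ht]
      exact ⟨t, by ring⟩
    rcases eq_or_ne u w with rfl | huw
    · rw [if_neg huv, if_pos rfl]
      have hw0 : u ≠ 0 := fun h => h0 (h ▸ hwB)
      have hnB' : u ∉ B' := Finset.notMem_erase u (B.erase v)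
      have heven : ¬ Odd (scCount p k u) := fun ho => hnB' ((hmem u).mpr ⟨hw0, ho⟩)
      rw [Nat.not_odd_iff_even] at heven
      obtain ⟨t, ht⟩ := heven
      refine iff_of_true ⟨hw0, ?_⟩ hwB
      rw [ht]
      exact ⟨t, by ring⟩
    · rw [if_neg huv, if_neg huw, add_zero, add_zero, ← hmem u]
      rw [hB', Finset.mem_erase, Finset.mem_erase]
      constructor
      · rintro h; exact h.2.2
      · intro h; exact ⟨huw, huv, h⟩
  · -- no k-odd vectors
    rcases Finset.eq_empty_or_nonempty B with rfl | ⟨v, hvB⟩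
    · refine ⟨fun _ => [], ?_, ?_, ?_⟩
      · intro a ha
        exfalso
        obtain ⟨i, hi⟩ := mem_totalWord.mp ha
        simp at hi
      · apply Finset.ext
        intro u
        rw [mem_Bk]
        simp [scCount, Nat.odd_iff]
      · intro i _ a; simp
    · have hvk : v k = 0 := by
        have : ¬ (v k = 1) := fun h => hFne ⟨v, Finset.mem_filter.mpr ⟨hvB, h⟩⟩
        revert this; generalize v k = x; revert x; decide
      set B' := B.erase v with hB'
      have hsub : B' ⊂ B := Finset.erase_ssubset hvB
      have h0' : (0 : Fin n → ZMod 2) ∉ B' := fun h => h0 (Finset.mem_of_mem_erase h)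
      have hev' : Even ((B'.filter fun u => u k = 1).card) := by
        have he : B'.filter (fun u => u k = 1) = (B.filter fun u => u k = 1).erase v := by
          rw [hB', Finset.filter_erase]
        have hvnF : v ∉ B.filter fun u => u k = 1 := by
          rw [Finset.mem_filter]
          rintro ⟨_, h⟩
          rw [hvk] at h
          exact absurd h (by decide)
        rw [he, Finset.erase_eq_of_notMem hvnF]
        exact hev
      obtain ⟨p, hpg, hpb, hpo⟩ := ih B' hsub h0' hev'
      obtain ⟨N, hN⟩ := exists_bound (totalWord p)
      have hfresh : ∀ a ∈ totalWord (gadget1 k v N), a ∉ totalWord p :=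
        fun a ha hp => by have := g1_ge ha; have := hN a hp; omega
      refine ⟨fun i => p i ++ gadget1 k v N i,
        extend_gauss hpg g1_gauss hfresh, ?_, extend_off hpo g1_off hfresh⟩
      have hmem : ∀ u, u ∈ B' ↔ u ≠ 0 ∧ Odd (scCount p k u) := fun u => by
        rw [← hpb, mem_Bk]
      apply Finset.ext
      intro u
      rw [mem_Bk, extend_scCount hfresh u, g1_sc hvk u]
      rcases eq_or_ne u v with rfl | huv
      · rw [if_pos rfl]
        have hv0 : u ≠ 0 := fun h => h0 (h ▸ hvB)
        have hnB' : u ∉ B' := Finset.notMem_erase u B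
        have heven : ¬ Odd (scCount p k u) := fun ho => hnB' ((hmem u).mpr ⟨hv0, ho⟩)
        rw [Nat.not_odd_iff_even] at heven
        obtain ⟨t, ht⟩ := heven
        refine iff_of_true ⟨hv0, ?_⟩ hvB
        rw [ht]
        exact ⟨t, by ring⟩
      · rw [if_neg huv, add_zero, ← hmem u, hB', Finset.mem_erase]
        constructor
        · rintro h; exact h.2
        · intro h; exact ⟨huv, h⟩

/-- any subset of `(ℤ/2)ⁿ \ {0}` with an even number of `k`-odd vectors is
`B_k(p)` for some `n`-component Gauss phrase `p` all of whose single-component letters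
lie in the `k`-th component. -/
theorem Bk_realizable {n : ℕ} (k : Fin n) (B : Finset (Fin n → ZMod 2))
    (h0 : (0 : Fin n → ZMod 2) ∉ B)
    (hev : Even ((B.filter fun v => v k = 1).card)) :
    ∃ p : Phrase n, IsGaussPhrase p ∧ Bk p k = B ∧
      ∀ i : Fin n, i ≠ k → ∀ a : ℕ, (p i).count a ≤ 1 := by
  exact Bk_realizable' k B h0 hev
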